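/- Suppose K is a field with more than two elements, S is a spanning subset of X, and the graph G(S) is connected. Then, for any α ∈ X*, the affine transvection group Tr^α(S) has at most one non-singleton orbit on X. -/

import Mathlib

/-- The graph `G(S)`. -/
def transGraph {K X : Type*} [Field K] [AddCommGroup X] [Module K X]
    (ω : X →ₗ[K] X →ₗ[K] K) (S : Set X) : SimpleGraph S :=
  SimpleGraph.fromRel (fun u v => ω u.1 v.1 ≠ 0)

/-- Affine transvections `T^{α(s)}_{s,k} : x ↦ x + k(ω(x,s) + α(s))·s`. -/
def affTransvectionSet {K X : Type*} [Field K] [AddCommGroup X] [Module K X]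
    (ω : X →ₗ[K] X →ₗ[K] K) (S : Set X) (α : X → K) : Set (Equiv.Perm X) :=
  {f | ∃ s ∈ S, ∃ k : K, k ≠ 0 ∧ ∀ x, f x = x + (k * (ω x s + α s)) • s}

/-- The affine transvection group `Tr^α(S)`. -/
def affTransvectionGroup {K X : Type*} [Field K] [AddCommGroup X] [Module K X]
    (ω : X →ₗ[K] X →ₗ[K] K) (S : Set X) (α : X → K) : Subgroup (Equiv.Perm X) :=
  Subgroup.closure (affTransvectionSet ω S α)

namespace Stmt9Aux

variable {K X : Type*} [Field K] [AddCommGroup X] [Module K X]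
variable (ω : X →ₗ[K] X →ₗ[K] K) (S : Set X) (α : X → K)

/-- `z'` is in the orbit of `z`. -/
def Rel (z z' : X) : Prop := ∃ g ∈ affTransvectionGroup ω S α, g z = z'

lemma rel_refl (z : X) : Rel ω S α z z := ⟨1, one_mem _, rfl⟩

lemma rel_trans {z₁ z₂ z₃ : X} (h : Rel ω S α z₁ z₂) (h' : Rel ω S α z₂ z₃) :
    Rel ω S α z₁ z₃ := by
  obtain ⟨g, hg, hgz⟩ := h
  obtain ⟨g', hg', hgz'⟩ := h'
  exact ⟨g' * g, mul_mem hg' hg, by simp [Equiv.Perm.mul_apply, hgz, hgz']⟩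

lemma skew (halt : ∀ x, ω x x = 0) (x y : X) : ω x y = - ω y x := by
  have h : ω x y + ω y x = 0 := by
    have h := halt (x + y)
    simp only [map_add, LinearMap.add_apply, halt] at h
    linear_combination h
  linear_combination h

/-- The basic affine transvection as a permutation. -/
def transvEquiv (halt : ∀ x, ω x x = 0) (t : X) (k : K) : Equiv.Perm X where
  toFun x := x + (k * (ω x t + α t)) • t
  invFun x := x + (-(k * (ω x t + α t))) • t
  left_inv x := by
    have h1 : (ω (x + (k * (ω x t + α t)) • t)) t = ω x t := by
      rw [map_add, map_smul]
      simp [halt t]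
    show x + (k * (ω x t + α t)) • t
        + (-(k * ((ω (x + (k * (ω x t + α t)) • t)) t + α t))) • t = x
    rw [h1, neg_smul, add_neg_cancel_right]
  right_inv x := by
    have h1 : (ω (x + (-(k * (ω x t + α t))) • t)) t = ω x t := by
      rw [map_add, map_smul]
      simp [halt t]
    show x + (-(k * (ω x t + α t))) • t
        + (k * ((ω (x + (-(k * (ω x t + α t))) • t)) t + α t)) • t = x
    rw [h1, neg_smul, neg_add_cancel_right]

lemma transvEquiv_mem (halt : ∀ x, ω x x = 0) {t : X} (ht : t ∈ S) {k : K} (hk : k ≠ 0) :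
    transvEquiv ω α halt t k ∈ affTransvectionGroup ω S α :=
  Subgroup.subset_closure ⟨t, ht, k, hk, fun _ => rfl⟩

/-- The basic move: if the coefficient of `z` at `t` is nonzero, we can translate `z`
by any multiple of `t`. -/
lemma rel_move (halt : ∀ x, ω x x = 0) {t : X} (ht : t ∈ S) (z : X) (a : K)
    (h : ω z t + α t ≠ 0) :
    Rel ω S α z (z + a • t) := by
  rcases eq_or_ne a 0 with rfl | ha
  · rw [zero_smul, add_zero]; exact rel_refl ω S α z
  · refine ⟨transvEquiv ω α halt t (a / (ω z t + α t)),
      transvEquiv_mem ω S α halt ht (div_ne_zero ha h), ?_⟩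
    show z + (a / (ω z t + α t) * (ω z t + α t)) • t = z + a • t
    rw [div_mul_cancel₀ _ h]

/-- Points with all coefficients vanishing are fixed by the whole group. -/
lemma fixed_of_forall (z : X) (h : ∀ t ∈ S, ω z t + α t = 0) :
    ∀ g ∈ affTransvectionGroup ω S α, g z = z := by
  intro g hg
  induction hg using Subgroup.closure_induction with
  | mem f hf =>
    obtain ⟨t, ht, k, hk, hfx⟩ := hf
    rw [hfx z, h t ht, mul_zero, zero_smul, add_zero]
  | one => rfl
  | mul g₁ g₂ _ _ h₁ h₂ => simp [Equiv.Perm.mul_apply, h₂, h₁]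
  | inv g₁ _ h₁ =>
    conv_lhs => rw [← h₁]
    exact g₁.symm_apply_apply z

lemma adj_omega_ne (halt : ∀ x, ω x x = 0) {u v : ↥S} (h : (transGraph ω S).Adj u v) :
    ω u.1 v.1 ≠ 0 := by
  rw [transGraph, SimpleGraph.fromRel_adj] at h
  rcases h.2 with h' | h'
  · exact h'
  · rw [skew ω halt]
    exact neg_ne_zero.mpr h'

lemma exists_avoid (hK : ∃ k : K, k ≠ 0 ∧ k ≠ 1) (b₁ b₂ : K) :
    ∃ b : K, b ≠ b₁ ∧ b ≠ b₂ := by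
  obtain ⟨k, hk0, hk1⟩ := hK
  by_contra hcon
  push_neg at hcon
  have v : ∀ b : K, b = b₁ ∨ b = b₂ := fun b => or_iff_not_imp_left.mpr (hcon b)
  rcases v 0 with r0 | r0 <;> rcases v 1 with r1 | r1 <;> rcases v k with rk | rk <;>
    first
      | exact zero_ne_one (r0.trans r1.symm)
      | exact hk0 (rk.trans r0.symm)
      | exact hk1 (rk.trans r1.symm)

lemma exists_good (hK : ∃ k : K, k ≠ 0 ∧ k ≠ 1) {ν : K} (hν : ν ≠ 0) (c₁ c₂ : K) :
    ∃ b : K, c₁ + b * ν ≠ 0 ∧ c₂ + b * ν ≠ 0 := by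
  obtain ⟨b, h1, h2⟩ := exists_avoid hK (-c₁ / ν) (-c₂ / ν)
  refine ⟨b, fun hc => h1 ?_, fun hc => h2 ?_⟩
  · rw [eq_div_iff hν]; linear_combination hc
  · rw [eq_div_iff hν]; linear_combination hc

lemma expand (z : X) (b : K) (u s : X) :
    ω (z + b • u) s + α s = (ω z s + α s) + b * ω u s := by
  rw [map_add, map_smul]
  simp only [LinearMap.add_apply, LinearMap.smul_apply, smul_eq_mul]
  ring

/-- Step lemma: if `z` and `z + a • t` both have nonzero coefficient at an anchor `p`
connected to `t` in the graph, then `z + a • t` is in the orbit of `z`. -/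
lemma walk_move (halt : ∀ x, ω x x = 0) (hK : ∃ k : K, k ≠ 0 ∧ k ≠ 1)
    {p q : ↥S} (w : (transGraph ω S).Walk p q) :
    ∀ (z : X) (a : K), ω z p.1 + α p.1 ≠ 0 → ω (z + a • q.1) p.1 + α p.1 ≠ 0 →
      Rel ω S α z (z + a • q.1) := by
  induction w with
  | nil =>
    intro z a h _
    exact rel_move ω S α halt (Subtype.mem _) z a h
  | @cons p u q h w ih =>
    intro z a hz hend
    have hν : ω p.1 u.1 ≠ 0 := adj_omega_ne ω S halt h
    obtain ⟨b, hb1, hb2⟩ := exists_good hK hν (ω z u.1 + α u.1)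
      (ω z u.1 + α u.1 + a * ω q.1 u.1)
    have e1 : ω (z + b • p.1) u.1 + α u.1 = ω z u.1 + α u.1 + b * ω p.1 u.1 := by
      rw [expand]
      all_goals ring
    have e2 : ω (z + b • p.1 + a • q.1) u.1 + α u.1 =
        ω z u.1 + α u.1 + a * ω q.1 u.1 + b * ω p.1 u.1 := by
      rw [expand, expand]
      all_goals ring
    have r1 : Rel ω S α z (z + b • p.1) := rel_move ω S α halt (Subtype.mem _) z b hz
    have r2 : Rel ω S α (z + b • p.1) (z + b • p.1 + a • q.1) := by
      apply ih (z + b • p.1) a (by rw [e1]; exact hb1)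
      rw [e2]; exact hb2
    have r3 : Rel ω S α (z + b • p.1 + a • q.1) (z + a • q.1) := by
      have hco : ω (z + b • p.1 + a • q.1) p.1 + α p.1 ≠ 0 := by
        have e3 : ω (z + b • p.1 + a • q.1) p.1 + α p.1 =
            ω (z + a • q.1) p.1 + α p.1 := by
          rw [expand, expand, expand, halt p.1]
          all_goals ring
        rw [e3]; exact hend
      have hmv := rel_move ω S α halt (Subtype.mem p) (z + b • p.1 + a • q.1) (-b) hco
      have heq : z + b • p.1 + a • q.1 + (-b) • p.1 = z + a • q.1 := by module
      rwa [heq] at hmv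
    exact rel_trans ω S α (rel_trans ω S α r1 r2) r3

/-- Transport a nonzero coefficient along a walk. -/
lemma walk_witness (halt : ∀ x, ω x x = 0) (hK : ∃ k : K, k ≠ 0 ∧ k ≠ 1)
    {p q : ↥S} (w : (transGraph ω S).Walk p q) :
    ∀ z : X, ω z p.1 + α p.1 ≠ 0 →
      ∃ z', Rel ω S α z z' ∧ ω z' q.1 + α q.1 ≠ 0 := by
  induction w with
  | nil => intro z h; exact ⟨z, rel_refl ω S α z, h⟩
  | @cons p u q h w ih =>
    intro z hz
    have hν : ω p.1 u.1 ≠ 0 := adj_omega_ne ω S halt h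
    obtain ⟨e, he, -⟩ := exists_good hK hν (ω z u.1 + α u.1) (ω z u.1 + α u.1)
    have e1 : ω (z + e • p.1) u.1 + α u.1 = ω z u.1 + α u.1 + e * ω p.1 u.1 := by
      rw [expand]
      all_goals ring
    obtain ⟨z', hr, hq⟩ := ih (z + e • p.1) (by rw [e1]; exact he)
    exact ⟨z', rel_trans ω S α (rel_move ω S α halt (Subtype.mem p) z e hz) hr, hq⟩

/-- Step lemma, for arbitrary `s t ∈ S` via connectivity. -/
lemma sl (halt : ∀ x, ω x x = 0) (hK : ∃ k : K, k ≠ 0 ∧ k ≠ 1)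
    (hconn : (transGraph ω S).Connected)
    {s : X} (hs : s ∈ S) {t : X} (ht : t ∈ S) (z : X) (a : K)
    (h1 : ω z s + α s ≠ 0) (h2 : ω (z + a • t) s + α s ≠ 0) :
    Rel ω S α z (z + a • t) := by
  obtain ⟨w⟩ := hconn.preconnected ⟨s, hs⟩ ⟨t, ht⟩
  exact walk_move ω S α halt hK w z a h1 h2

/-- Main list lemma: if `z` and the endpoint both have nonzero coefficient at `s`, we can
realize the displacement given by a list of scaled elements of `S`. -/
lemma list_move (halt : ∀ x, ω x x = 0) (hK : ∃ k : K, k ≠ 0 ∧ k ≠ 1)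
    (hconn : (transGraph ω S).Connected) {s : X} (hs : s ∈ S) :
    ∀ (n : ℕ) (L : List (K × X)), L.length ≤ n → (∀ p ∈ L, p.2 ∈ S) →
      ∀ z : X, ω z s + α s ≠ 0 →
        ω (z + (L.map fun p => p.1 • p.2).sum) s + α s ≠ 0 →
        Rel ω S α z (z + (L.map fun p => p.1 • p.2).sum) := by
  intro n
  induction n with
  | zero =>
    intro L hL _ z hz _
    rw [Nat.le_zero, List.length_eq_zero_iff] at hL
    subst hL
    simpa using rel_refl ω S α z
  | succ n ihn =>
    intro L hL hmem z hz hend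
    rcases L with _ | ⟨⟨a, t⟩, L'⟩
    · simpa using rel_refl ω S α z
    · have ht : t ∈ S := hmem (a, t) List.mem_cons_self
      have hmem' : ∀ p ∈ L', p.2 ∈ S := fun p hp => hmem p (List.mem_cons_of_mem _ hp)
      have hL' : L'.length ≤ n := by simpa using hL
      have hsum : z + ((((a, t) :: L').map fun p => p.1 • p.2).sum) =
          z + a • t + ((L'.map fun p => p.1 • p.2).sum) := by
        simp [add_assoc]
      by_cases hγ : ω (z + a • t) s + α s ≠ 0
      · -- head works directly
        have r1 : Rel ω S α z (z + a • t) := sl ω S α halt hK hconn hs ht z a hz hγ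
        rw [hsum] at hend ⊢
        have r2 := ihn L' hL' hmem' (z + a • t) hγ hend
        exact rel_trans ω S α r1 r2
      · push_neg at hγ
        rcases L' with _ | ⟨⟨a', t'⟩, L''⟩
        · exfalso
          apply hend
          simpa using hγ
        · have ht' : t' ∈ S := hmem' (a', t') List.mem_cons_self
          have hmem'' : ∀ p ∈ L'', p.2 ∈ S := fun p hp => hmem' p (List.mem_cons_of_mem _ hp)
          have hL'' : L''.length ≤ n := by
            simp at hL; omega
          have hsum2 : z + ((((a, t) :: (a', t') :: L'').map fun p => p.1 • p.2).sum) =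
              z + a • t + a' • t' + ((L''.map fun p => p.1 • p.2).sum) := by
            simp only [List.map_cons, List.sum_cons]
            module
          by_cases hγ' : ω (z + a' • t') s + α s ≠ 0
          · -- reorder: do (a', t') first
            have r1 : Rel ω S α z (z + a' • t') := sl ω S α halt hK hconn hs ht' z a' hz hγ'
            have hswap : z + a' • t' + ((((a, t) :: L'').map fun p => p.1 • p.2).sum) =
                z + ((((a, t) :: (a', t') :: L'').map fun p => p.1 • p.2).sum) := by
              simp only [List.map_cons, List.sum_cons]
              module
            have hend' : ω (z + a' • t' + ((((a, t) :: L'').map fun p => p.1 • p.2).sum)) s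
                + α s ≠ 0 := by
              rw [hswap]; exact hend
            have hlen : ((a, t) :: L'').length ≤ n := by
              simp at hL ⊢; omega
            have hmem2 : ∀ p ∈ (a, t) :: L'', p.2 ∈ S := by
              intro p hp
              rcases List.mem_cons.mp hp with h | h
              · subst h; exact ht
              · exact hmem'' p h
            have r2 := ihn ((a, t) :: L'') hlen hmem2 (z + a' • t') hγ' hend'
            have := rel_trans ω S α r1 r2
            rwa [hswap] at this
          · -- both head coefficients vanish: use the splitting trick
            push_neg at hγ'
            obtain ⟨k, hk0, hk1⟩ := hK
            have hγe : (ω z s + α s) + a * ω t s = 0 := by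
              rw [← expand ω α]; exact hγ
            have hγ'e : (ω z s + α s) + a' * ω t' s = 0 := by
              rw [← expand ω α]; exact hγ'
            have h1k : (1 : K) - k ≠ 0 := sub_ne_zero.mpr (Ne.symm hk1)
            -- z₁ = z + (k*a) • t
            have co1 : ω (z + (k * a) • t) s + α s = (1 - k) * (ω z s + α s) := by
              rw [expand ω α]; linear_combination k * hγe
            have r1 : Rel ω S α z (z + (k * a) • t) := by
              apply sl ω S α halt ⟨k, hk0, hk1⟩ hconn hs ht z (k * a) hz
              rw [co1]; exact mul_ne_zero h1k hz
            -- z₂ = z₁ + a' • t'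
            have co2 : ω (z + (k * a) • t + a' • t') s + α s = -(k * (ω z s + α s)) := by
              rw [expand ω α, co1]; linear_combination hγ'e
            have r2 : Rel ω S α (z + (k * a) • t) (z + (k * a) • t + a' • t') := by
              apply sl ω S α halt ⟨k, hk0, hk1⟩ hconn hs ht' _ a'
                (by rw [co1]; exact mul_ne_zero h1k hz)
              rw [co2]; exact neg_ne_zero.mpr (mul_ne_zero hk0 hz)
            -- z₃ = z₂ + ((1-k)*a) • t = z + a•t + a'•t'
            have co3 : ω (z + (k * a) • t + a' • t' + ((1 - k) * a) • t) s + α s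
                = -(ω z s + α s) := by
              rw [expand ω α, co2]; linear_combination (1 - k) * hγe
            have r3 : Rel ω S α (z + (k * a) • t + a' • t')
                (z + (k * a) • t + a' • t' + ((1 - k) * a) • t) := by
              apply sl ω S α halt ⟨k, hk0, hk1⟩ hconn hs ht _ ((1 - k) * a)
                (by rw [co2]; exact neg_ne_zero.mpr (mul_ne_zero hk0 hz))
              rw [co3]; exact neg_ne_zero.mpr hz
            have heq3 : z + (k * a) • t + a' • t' + ((1 - k) * a) • t =
                z + a • t + a' • t' := by module
            have co3' : ω (z + a • t + a' • t') s + α s = -(ω z s + α s) := by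
              rw [← heq3]; exact co3
            rw [hsum2] at hend ⊢
            have hend'' : ω (z + a • t + a' • t'
                + ((L''.map fun p => p.1 • p.2).sum)) s + α s ≠ 0 := hend
            have r4 : Rel ω S α (z + a • t + a' • t')
                (z + a • t + a' • t' + ((L''.map fun p => p.1 • p.2).sum)) := by
              apply ihn L'' hL'' hmem'' _ (by rw [co3']; exact neg_ne_zero.mpr hz) hend''
            refine rel_trans ω S α r1 (rel_trans ω S α r2 ?_)
            rw [← heq3] at r4 ⊢
            exact rel_trans ω S α r3 r4

end Stmt9Aux

/-- if `K` has more than two elements, `S` spans `X` and `G(S)`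
is connected, then for every `α ∈ X*` the affine transvection group `Tr^α(S)`
has at most one non-singleton orbit on `X`: any two points that are not fixed
by the whole group are in the same orbit. -/
theorem stmt9 {K X : Type*} [Field K] [AddCommGroup X] [Module K X]
    [FiniteDimensional K X]
    (ω : X →ₗ[K] X →ₗ[K] K) (halt : ∀ x, ω x x = 0)
    (hK : ∃ k : K, k ≠ 0 ∧ k ≠ 1)
    (S : Set X) (hspan : Submodule.span K S = ⊤)
    (hconn : (transGraph ω S).Connected)
    (α : Module.Dual K X) (x y : X)
    (hx : ∃ g ∈ affTransvectionGroup ω S ⇑α, g x ≠ x)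
    (hy : ∃ g ∈ affTransvectionGroup ω S ⇑α, g y ≠ y) :
    ∃ g ∈ affTransvectionGroup ω S ⇑α, g x = y := by
  classical
  have hwx : ∃ t ∈ S, ω x t + α t ≠ 0 := by
    by_contra h
    push_neg at h
    obtain ⟨g, hg, hgx⟩ := hx
    exact hgx (Stmt9Aux.fixed_of_forall ω S (⇑α) x h g hg)
  have hwy : ∃ t ∈ S, ω y t + α t ≠ 0 := by
    by_contra h
    push_neg at h
    obtain ⟨g, hg, hgy⟩ := hy
    exact hgy (Stmt9Aux.fixed_of_forall ω S (⇑α) y h g hg)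
  obtain ⟨sx, hsx, hx0⟩ := hwx
  obtain ⟨sy, hsy, hy0⟩ := hwy
  obtain ⟨w⟩ := hconn.preconnected ⟨sx, hsx⟩ ⟨sy, hsy⟩
  obtain ⟨x₀, hrel, hx₀⟩ := Stmt9Aux.walk_witness ω S (⇑α) halt hK w x hx0
  have hmem : y - x₀ ∈ Submodule.span K S := by rw [hspan]; trivial
  obtain ⟨n, f, g, hfg⟩ := Submodule.mem_span_set'.mp hmem
  set L : List (K × X) := List.ofFn (fun i => (f i, (g i : X))) with hLdef
  have hLsum : (L.map fun p => p.1 • p.2).sum = y - x₀ := by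
    rw [hLdef, List.map_ofFn, List.sum_ofFn]
    simpa using hfg
  have hLmem : ∀ p ∈ L, p.2 ∈ S := by
    intro p hp
    rw [hLdef, List.mem_ofFn] at hp
    obtain ⟨i, rfl⟩ := hp
    exact (g i).2
  have hendco : ω (x₀ + (L.map fun p => p.1 • p.2).sum) sy + α sy ≠ 0 := by
    rw [hLsum]
    simpa using hy0
  have hmain := Stmt9Aux.list_move ω S (⇑α) halt hK hconn hsy L.length L le_rfl hLmem x₀
    hx₀ hendco
  rw [hLsum] at hmain
  have h2 : Stmt9Aux.Rel ω S (⇑α) x₀ y := by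
    simpa using hmain
  exact Stmt9Aux.rel_trans ω S (⇑α) hrel h2
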